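/- In the three-gap setting with β < max(α, 1 − α), as N → ∞: (1/N)·#{ i ∈ {0,…,N−1} : {iα} < β and the gap after i equals b } tends to β − s; (1/N)·#{ i ∈ {0,…,N−1} : {iα} < β and the gap after i equals d } tends to β − t; and (1/N)·#{ i ∈ {0,…,N−1} : {iα} < β and the gap after i equals b + d } tends to s + t − β. -/

import Mathlib

set_option maxHeartbeats 1000000

open Filter Finset

namespace ThreeGapAux

lemma fract_fract_add (a b : ℝ) : Int.fract (Int.fract a + b) = Int.fract (a + b) := by
  have h : Int.fract a + b = a + b - (⌊a⌋ : ℤ) := by rw [Int.fract]; ring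
  rw [h, Int.fract_sub_intCast]

lemma fract_add_fract (a b : ℝ) : Int.fract (Int.fract a + Int.fract b) = Int.fract (a + b) := by
  rw [fract_fract_add]
  have h : a + Int.fract b = a + b - (⌊b⌋ : ℤ) := by rw [Int.fract]; ring
  rw [h, Int.fract_sub_intCast]

lemma fract_sub_fract (a b : ℝ) : Int.fract (Int.fract a - Int.fract b) = Int.fract (a - b) := by
  have h : Int.fract a - Int.fract b = (a - b) - ((⌊a⌋ - ⌊b⌋ : ℤ) : ℝ) := by
    rw [Int.fract, Int.fract]; push_cast; ring
  rw [h, Int.fract_sub_intCast]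

/-- round minimizes distance to integers -/
lemma abs_sub_round_min (x : ℝ) (p : ℤ) : |x - round x| ≤ |x - p| := by
  rw [abs_sub_round_eq_min]
  set y := x - (p : ℝ) with hy
  have hf : Int.fract y = Int.fract x := by rw [hy, Int.fract_sub_intCast]
  rcases le_or_gt 0 y with h | h
  · refine le_trans (min_le_left _ _) ?_
    rw [← hf, abs_of_nonneg h]
    have : (0:ℝ) ≤ (⌊y⌋ : ℝ) := by exact_mod_cast Int.floor_nonneg.mpr h
    rw [Int.fract]; linarith
  · refine le_trans (min_le_right _ _) ?_
    rw [← hf, abs_of_neg h, Int.fract]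
    have : (⌊y⌋ : ℝ) ≤ -1 := by
      have : ⌊y⌋ ≤ -1 := by
        have h0 : ⌊y⌋ < 0 := Int.floor_lt.mpr (by simpa using h)
        omega
      exact_mod_cast this
    linarith



lemma exists_good_denom (α : ℝ) (hirr : Irrational α) (K : ℕ) :
    ∃ (q : ℕ) (p : ℤ), K < q ∧ Nat.Coprime p.natAbs q ∧ |(q:ℝ) * α - p| < 1 / q := by
  classical
  set F : Finset ℝ :=
    insert 1 ((Finset.Icc 1 K).image (fun k : ℕ => |(k:ℝ) * α - round ((k:ℝ)*α)|)) with hF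
  have hne : F.Nonempty := insert_nonempty _ _
  set m := F.min' hne with hm
  have hmem_pos : ∀ x ∈ F, 0 < x := by
    intro x hx
    rcases mem_insert.mp hx with rfl | hx
    · norm_num
    · obtain ⟨k, hk, rfl⟩ := mem_image.mp hx
      have hk1 : k ≠ 0 := by have := (mem_Icc.mp hk).1; omega
      have hirr' : Irrational ((k:ℝ) * α) := hirr.natCast_mul hk1
      have : (k:ℝ) * α - round ((k:ℝ)*α) ≠ 0 := sub_ne_zero.mpr (hirr'.ne_int _)
      exact abs_pos.mpr this
  have hm_pos : 0 < m := hmem_pos _ (F.min'_mem hne)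
  obtain ⟨n, hn⟩ := exists_nat_gt (1 / m)
  have hn_pos : 0 < n := by
    have h0 : (0:ℝ) < n := lt_trans (by positivity) hn
    exact_mod_cast h0
  obtain ⟨j, k, hk0, hkn, hjk⟩ := Real.exists_int_int_abs_mul_sub_le α hn_pos
  have hbound : |(k:ℝ) * α - j| < m := by
    have h1 : (1:ℝ) / (n + 1) < m := by
      rw [div_lt_iff₀ (by positivity)]
      rw [div_lt_iff₀ hm_pos] at hn
      nlinarith [hm_pos]
    exact lt_of_le_of_lt hjk h1
  set r : ℚ := Rat.divInt j k with hr
  set q : ℕ := r.den with hq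
  set p : ℤ := r.num with hp
  have hk_ne : k ≠ 0 := hk0.ne'
  have hqk : (q:ℤ) ∣ k := Rat.den_dvd j k
  have hq_pos : 0 < q := r.pos
  have hq_le_k : (q:ℤ) ≤ k := Int.le_of_dvd hk0 hqk
  have hrcast : (r : ℝ) = (j:ℝ) / (k:ℝ) := by
    rw [hr]
    exact Rat.cast_divInt_of_ne_zero _ (Int.cast_ne_zero.mpr hk_ne)
  have hrcast2 : (r : ℝ) = (p:ℝ) / (q:ℝ) := by
    rw [Rat.cast_def]
  have e1 : (q:ℝ) * α - p = q * (α - (r:ℝ)) := by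
    rw [hrcast2]
    have : (q:ℝ) ≠ 0 := Nat.cast_ne_zero.mpr hq_pos.ne'
    field_simp
  have e2 : (k:ℝ) * α - j = k * (α - (r:ℝ)) := by
    rw [hrcast]
    have : (k:ℝ) ≠ 0 := Int.cast_ne_zero.mpr hk_ne
    field_simp
  have habs : |(q:ℝ) * α - p| ≤ |(k:ℝ) * α - j| := by
    rw [e1, e2, abs_mul, abs_mul]
    have h1 : |(q:ℝ)| ≤ |(k:ℝ)| := by
      rw [abs_of_nonneg (by positivity), abs_of_pos (by exact_mod_cast hk0)]
      exact_mod_cast hq_le_k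
    exact mul_le_mul_of_nonneg_right h1 (abs_nonneg _)
  refine ⟨q, p, ?_, r.reduced, ?_⟩
  · by_contra h
    push_neg at h
    have hqF : |(q:ℝ) * α - round ((q:ℝ)*α)| ∈ F := by
      apply mem_insert_of_mem
      exact mem_image.mpr ⟨q, mem_Icc.mpr ⟨hq_pos, h⟩, rfl⟩
    have h1 : m ≤ |(q:ℝ) * α - round ((q:ℝ)*α)| := F.min'_le _ hqF
    have h2 : |(q:ℝ) * α - round ((q:ℝ)*α)| ≤ |(q:ℝ)*α - p| := abs_sub_round_min _ _
    exact absurd (lt_of_le_of_lt (h1.trans h2) (lt_of_le_of_lt habs hbound)) (lt_irrefl m)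
  · have h1 : |(q:ℝ)*α - p| ≤ 1/(n+1) := habs.trans hjk
    have h2 : (1:ℝ)/(n+1) < 1/q := by
      apply div_lt_div_of_pos_left one_pos (by positivity)
      have : (q:ℝ) ≤ (k:ℝ) := by exact_mod_cast hq_le_k
      have : (k:ℝ) ≤ (n:ℝ) := by exact_mod_cast hkn
      push_cast; linarith [(show (q:ℝ) ≤ n by linarith)]
    exact lt_of_le_of_lt h1 h2




lemma card_filter_lt_le (q : ℕ) (X : ℝ) (hX : 0 ≤ X) :
    (((range q).filter (fun k : ℕ => (k:ℝ) < X)).card : ℝ) ≤ X + 1 := by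
  classical
  have hsub : (range q).filter (fun k : ℕ => (k:ℝ) < X) ⊆ range (Nat.ceil X) := by
    intro k hk
    simp only [mem_filter, mem_range] at hk ⊢
    exact Nat.lt_ceil.mpr hk.2
  have h1 := Finset.card_le_card hsub
  rw [card_range] at h1
  calc (((range q).filter (fun k : ℕ => (k:ℝ) < X)).card : ℝ) ≤ (Nat.ceil X : ℝ) := by
        exact_mod_cast h1
    _ ≤ X + 1 := (Nat.ceil_lt_add_one hX).le

lemma card_filter_interval_ge (q : ℕ) (U V : ℝ) (hU : 0 ≤ U) (hV : V ≤ q) :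
    V - U - 1 ≤ (((range q).filter (fun k : ℕ => U ≤ (k:ℝ) ∧ (k:ℝ) < V)).card : ℝ) := by
  classical
  rcases le_or_gt V U with h | h
  · have : (0:ℝ) ≤ (((range q).filter (fun k : ℕ => U ≤ (k:ℝ) ∧ (k:ℝ) < V)).card : ℝ) := by
      positivity
    linarith
  · have hsub : Finset.Ico (Nat.ceil U) (Nat.ceil V) ⊆
        (range q).filter (fun k : ℕ => U ≤ (k:ℝ) ∧ (k:ℝ) < V) := by
      intro k hk
      rw [Finset.mem_Ico] at hk
      have h1 : U ≤ (k:ℝ) := by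
        have := Nat.ceil_le.mp (le_refl (Nat.ceil U)) |>.trans (Nat.cast_le.mpr hk.1)
        exact this
      have h2 : (k:ℝ) < V := Nat.lt_ceil.mp hk.2
      refine mem_filter.mpr ⟨mem_range.mpr ?_, h1, h2⟩
      have : (k:ℝ) < (q:ℝ) := lt_of_lt_of_le h2 hV
      exact_mod_cast this
    have hcard := Finset.card_le_card hsub
    rw [Nat.card_Ico] at hcard
    have hle : (((Nat.ceil V) - (Nat.ceil U) : ℕ) : ℝ) ≤
        (((range q).filter (fun k : ℕ => U ≤ (k:ℝ) ∧ (k:ℝ) < V)).card : ℝ) := by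
      exact_mod_cast hcard
    refine le_trans ?_ hle
    have hV' : V ≤ (Nat.ceil V : ℝ) := Nat.le_ceil V
    have hU' : (Nat.ceil U : ℝ) < U + 1 := Nat.ceil_lt_add_one hU
    rcases le_or_gt (Nat.ceil U) (Nat.ceil V) with hc | hc
    · rw [Nat.cast_sub hc]; linarith
    · have h0 : (Nat.ceil V) - (Nat.ceil U) = 0 := Nat.sub_eq_zero_of_le hc.le
      rw [h0]
      have : (Nat.ceil V : ℝ) ≤ (Nat.ceil U : ℝ) := by exact_mod_cast hc.le
      simp only [Nat.cast_zero]
      nlinarith [Nat.le_ceil V]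

lemma block_bound (α : ℝ) (x0 c : ℝ) (hc0 : 0 ≤ c) (hc1 : c ≤ 1)
    (q : ℕ) (p : ℤ) (hq : 0 < q) (hcop : Nat.Coprime p.natAbs q)
    (hθ : |(q:ℝ) * α - p| < 1 / q) :
    |(((range q).filter (fun j : ℕ => Int.fract (x0 + (j:ℝ) * α) < c)).card : ℝ) - q * c| ≤ 3 := by
  classical
  have hq0 : (0:ℝ) < q := by exact_mod_cast hq
  set θ : ℝ := (q:ℝ) * α - p with hθdef
  have hαθ : α = ((p:ℝ) + θ) / q := by field_simp [hθdef]; rw [hθdef]; ring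
  set w : ℝ := Int.fract x0 with hw
  have hw0 : 0 ≤ w := Int.fract_nonneg x0
  have hw1 : w < 1 := Int.fract_lt_one x0
  set a : ℤ := ⌊(q:ℝ) * w⌋ with ha
  set e : ℝ := Int.fract ((q:ℝ) * w) with he
  have he0 : 0 ≤ e := Int.fract_nonneg _
  have he1 : e < 1 := Int.fract_lt_one _
  have hqw : (q:ℝ) * w = (a:ℝ) + e := by rw [he, Int.fract]; push_cast; ring
  set r : ℕ → ℕ := fun j => ((a + j * p) % q).toNat with hrdef
  have hr_nonneg : ∀ j : ℕ, 0 ≤ (a + j * p) % (q:ℤ) := fun j =>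
    Int.emod_nonneg _ (by exact_mod_cast hq.ne')
  have hr_lt : ∀ j : ℕ, r j < q := by
    intro j
    show ((a + (j:ℤ) * p) % (q:ℤ)).toNat < q
    have h1 := Int.emod_lt_of_pos (a + (j:ℤ) * p) (by exact_mod_cast hq : (0:ℤ) < q)
    have h2 := hr_nonneg j
    omega
  have hr_cast : ∀ j : ℕ, ((r j : ℕ) : ℝ) = (((a + j * p) % q : ℤ) : ℝ) := by
    intro j
    have := hr_nonneg j
    show ((((a + (j:ℤ) * p) % (q:ℤ)).toNat : ℕ) : ℝ) = _
    exact_mod_cast congrArg (Int.cast : ℤ → ℝ) (Int.toNat_of_nonneg this)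
  -- key computation
  have KC : ∀ j : ℕ, Int.fract (x0 + (j:ℝ) * p / q) = (e + r j) / q := by
    intro j
    have h1 : x0 + (j:ℝ) * p / q = (w + (j:ℝ) * p / q) + (⌊x0⌋ : ℤ) := by
      rw [hw, Int.fract]; ring
    rw [h1, Int.fract_add_intCast]
    have h2 : w + (j:ℝ) * p / q = ((a:ℝ) + e + (j:ℝ) * p) / q := by
      rw [eq_div_iff hq0.ne']
      have h2' : (w + (j:ℝ) * p / q) * q = w * q + (j:ℝ) * p := by
        rw [add_mul, div_mul_cancel₀ _ hq0.ne']
      rw [h2']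
      nlinarith [hqw]
    rw [h2]
    have h3 := Int.mul_ediv_add_emod (a + j * p) q
    have h4 : ((a:ℝ) + e + (j:ℝ) * p) / q
        = (e + r j) / q + (((a + j * p) / q : ℤ) : ℝ) := by
      rw [hr_cast j]
      have h3' : (((a + j * p) % q : ℤ) : ℝ)
          = (a:ℝ) + (j:ℝ) * p - (q:ℝ) * (((a + j * p) / q : ℤ) : ℝ) := by
        have hc := congrArg (fun z : ℤ => (z : ℝ)) h3
        push_cast at hc
        linarith
      rw [h3', div_add' _ _ _ hq0.ne']
      congr 1
      ring
    rw [h4, Int.fract_add_intCast]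
    apply Int.fract_eq_self.mpr
    constructor
    · positivity
    · rw [div_lt_one hq0]
      have : ((r j : ℕ) : ℝ) ≤ (q:ℝ) - 1 := by
        have := hr_lt j; 
        have : (r j : ℝ) < (q:ℝ) := by exact_mod_cast this
        have h5 : ((r j : ℕ) : ℝ) + 1 ≤ q := by
          have := hr_lt j
          exact_mod_cast Nat.succ_le_of_lt this
        linarith
      linarith
  have FR : ∀ j : ℕ, Int.fract (x0 + (j:ℝ) * α)
      = Int.fract ((e + r j) / q + (j:ℝ) * θ / q) := by
    intro j
    have h1 : x0 + (j:ℝ) * α = (x0 + (j:ℝ) * p / q) + (j:ℝ) * θ / q := by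
      rw [hαθ]; field_simp; ring
    rw [h1, ← fract_fract_add (x0 + (j:ℝ) * p / q) ((j:ℝ) * θ / q), KC j]
  have hδ : ∀ j < q, |(j:ℝ) * θ / q| < 1 / q := by
    intro j hj
    have hj' : (j:ℝ) ≤ (q:ℝ) := by exact_mod_cast hj.le
    rw [abs_div, abs_mul, abs_of_nonneg (by positivity : (0:ℝ) ≤ (j:ℝ)),
      abs_of_pos hq0]
    rw [div_lt_div_iff₀ hq0 hq0]
    have h2 : |θ| < 1 / q := hθ
    have h3 : (j:ℝ) * |θ| ≤ (q:ℝ) * |θ| := by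
      apply mul_le_mul_of_nonneg_right hj' (abs_nonneg _)
    calc (j:ℝ) * |θ| * q ≤ (q:ℝ) * |θ| * q := by nlinarith [abs_nonneg θ]
      _ < 1 / q * q * q := by
          have : (q:ℝ) * |θ| < (q:ℝ) * (1/q) := by
            apply mul_lt_mul_of_pos_left h2 hq0
          nlinarith
      _ = 1 * q := by field_simp
  -- injectivity and surjectivity of r on range q
  have hcop' : IsCoprime (q:ℤ) p := by
    rw [Int.isCoprime_iff_gcd_eq_one, Int.gcd]
    simpa [Int.natAbs_natCast, Nat.Coprime, Nat.gcd_comm] using hcop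
  have hr_inj : ∀ j1 < q, ∀ j2 < q, r j1 = r j2 → j1 = j2 := by
    intro j1 hj1 j2 hj2 hr12
    have hr12' : ((a + (j1:ℤ) * p) % (q:ℤ)).toNat = ((a + (j2:ℤ) * p) % (q:ℤ)).toNat := hr12
    have h1 : (a + (j1:ℤ) * p) % (q:ℤ) = (a + (j2:ℤ) * p) % q := by
      have := hr_nonneg j1; have := hr_nonneg j2
      omega
    have h2 : (q:ℤ) ∣ (a + j2 * p) - (a + j1 * p) := Int.ModEq.dvd h1
    have h3 : (q:ℤ) ∣ ((j2:ℤ) - j1) * p := by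
      have : (a + j2 * p) - (a + j1 * p) = ((j2:ℤ) - j1) * p := by ring
      rwa [this] at h2
    have h4 : (q:ℤ) ∣ ((j2:ℤ) - j1) := hcop'.dvd_of_dvd_mul_right h3
    have h5 : |(j2:ℤ) - j1| < q := by
      rw [abs_lt]
      constructor <;> [skip; skip] <;> push_cast <;> omega
    have h6 : (j2:ℤ) - j1 = 0 := Int.eq_zero_of_abs_lt_dvd h4 h5
    omega
  have hr_surj : ∀ m < q, ∃ j, j < q ∧ r j = m := by
    intro m hm
    have himg : (range q).image r = range q := by
      apply Finset.eq_of_subset_of_card_le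
      · intro x hx
        obtain ⟨j, hj, rfl⟩ := mem_image.mp hx
        exact mem_range.mpr (hr_lt j)
      · rw [card_range, Finset.card_image_of_injOn]
        · rw [card_range]
        · intro x hx y hy hxy
          exact hr_inj x (mem_range.mp hx) y (mem_range.mp hy) hxy
    have : m ∈ (range q).image r := by rw [himg]; exact mem_range.mpr hm
    obtain ⟨j, hj, hjm⟩ := mem_image.mp this
    exact ⟨j, mem_range.mp hj, hjm⟩
  have htrans : ∀ (P : ℕ → Prop) [DecidablePred P],
      ((range q).filter (fun j => P (r j))).card = ((range q).filter P).card := by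
    intro P _
    apply Finset.card_bij (fun j _ => r j)
    · intro j hj
      rw [mem_filter] at hj ⊢
      exact ⟨mem_range.mpr (hr_lt j), hj.2⟩
    · intro j1 hj1 j2 hj2 h
      exact hr_inj j1 (mem_range.mp (mem_filter.mp hj1).1) j2
        (mem_range.mp (mem_filter.mp hj2).1) h
    · intro m hm
      rw [mem_filter] at hm
      obtain ⟨j, hj, hjm⟩ := hr_surj m (mem_range.mp hm.1)
      exact ⟨j, mem_filter.mpr ⟨mem_range.mpr hj, by rw [hjm]; exact hm.2⟩, hjm⟩
  rw [abs_sub_le_iff]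
  constructor
  -- upper bound : card ≤ qc + 3
  · have hsub : (range q).filter (fun j : ℕ => Int.fract (x0 + (j:ℝ) * α) < c) ⊆
        (range q).filter (fun j : ℕ => ((e + r j) / q < c + 1/q ∨ (q:ℝ) - 1 < e + r j)) := by
      intro j hj
      rw [mem_filter] at hj ⊢
      obtain ⟨hjq, hjc⟩ := hj
      refine ⟨hjq, ?_⟩
      set g : ℝ := (e + r j) / q with hg
      set δ : ℝ := (j:ℝ) * θ / q with hδ'
      have hδj := hδ j (mem_range.mp hjq)
      rw [FR j] at hjc
      have hg0 : 0 ≤ g := by positivity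
      rcases lt_or_ge (g + δ) 1 with hlt | hge
      · rcases le_or_gt 0 (g + δ) with h0 | h0
        · rw [Int.fract_eq_self.mpr ⟨h0, hlt⟩] at hjc
          left
          rw [hg] at *
          have : |δ| < 1/q := hδj
          have := abs_lt.mp this
          linarith
        · left
          have : |δ| < 1/q := hδj
          have := abs_lt.mp this
          have hgsmall : g < 1 / q := by linarith
          calc (e + r j)/q = g := rfl
            _ < 1/q := hgsmall
            _ ≤ c + 1/q := by linarith
      · right
        have hab := abs_lt.mp (hδ j (mem_range.mp hjq))
        have hgbig : 1 - 1/(q:ℝ) < g := by linarith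
        have h2 : (1 - 1/(q:ℝ)) * q < g * q := mul_lt_mul_of_pos_right hgbig hq0
        have h3 : (1 - 1/(q:ℝ)) * q = q - 1 := by field_simp
        have h4 : g * q = e + r j := by rw [hg]; field_simp
        linarith
    have h1 := Finset.card_le_card hsub
    rw [htrans (fun m : ℕ => ((e + m) / q < c + 1/q ∨ (q:ℝ) - 1 < e + m))] at h1
    have h3 : ((range q).filter (fun m : ℕ => ((e + m) / q < c + 1/q ∨ (q:ℝ) - 1 < e + m))).card
        ≤ ((range q).filter (fun m : ℕ => (e + m) / q < c + 1/q)).card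
          + ((range q).filter (fun m : ℕ => (q:ℝ) - 1 < e + m)).card := by
      rw [Finset.filter_or]
      exact Finset.card_union_le _ _
    have h4 : (range q).filter (fun m : ℕ => (e + m) / q < c + 1/q)
        = (range q).filter (fun m : ℕ => (m:ℝ) < q * c + 1 - e) := by
      apply Finset.filter_congr
      intro m _
      rw [div_lt_iff₀ hq0]
      have hexp : (c + 1/(q:ℝ)) * q = c * q + 1 := by field_simp
      rw [hexp]
      constructor <;> intro h <;> linarith
    have h5 : ((range q).filter (fun m : ℕ => (m:ℝ) < q * c + 1 - e)).card
        ≤ (q:ℝ) * c + 1 - e + 1 := by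
      exact_mod_cast card_filter_lt_le q _ (by nlinarith [mul_nonneg hq0.le hc0])
    have h6 : ((range q).filter (fun m : ℕ => (q:ℝ) - 1 < e + m)).card ≤ 1 := by
      apply Finset.card_le_one.mpr
      intro m1 hm1 m2 hm2
      rw [mem_filter, mem_range] at hm1 hm2
      have a1 : (m1:ℝ) > (q:ℝ) - 2 := by linarith [hm1.2]
      have a2 : (m2:ℝ) > (q:ℝ) - 2 := by linarith [hm2.2]
      have b1r : (q:ℝ) < (m1:ℝ) + 2 := by linarith
      have b2r : (q:ℝ) < (m2:ℝ) + 2 := by linarith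
      have b1 : q < m1 + 2 := by exact_mod_cast b1r
      have b2 : q < m2 + 2 := by exact_mod_cast b2r
      omega
    have hfin : (((range q).filter (fun j : ℕ => Int.fract (x0 + (j:ℝ) * α) < c)).card : ℝ)
        ≤ (q:ℝ) * c + 3 := by
      have c1 : (((range q).filter (fun j : ℕ => Int.fract (x0 + (j:ℝ) * α) < c)).card : ℝ)
          ≤ (((range q).filter (fun m : ℕ => ((e + m) / q < c + 1/q ∨ (q:ℝ) - 1 < e + m))).card : ℝ) := by
        exact_mod_cast h1
      have c3 : (((range q).filter (fun m : ℕ => ((e + m) / q < c + 1/q ∨ (q:ℝ) - 1 < e + m))).card : ℝ)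
          ≤ (((range q).filter (fun m : ℕ => (e + m) / q < c + 1/q)).card : ℝ)
            + (((range q).filter (fun m : ℕ => (q:ℝ) - 1 < e + m)).card : ℝ) := by
        exact_mod_cast h3
      have c6 : (((range q).filter (fun m : ℕ => (q:ℝ) - 1 < e + m)).card : ℝ) ≤ 1 := by
        exact_mod_cast h6
      rw [h4] at c3
      linarith
    linarith
  -- lower bound : qc - 3 ≤ card
  · have hsub : (range q).filter (fun m : ℕ => (1:ℝ) - e ≤ (m:ℝ) ∧ (m:ℝ) < q * c - 1 - e)
        ⊆ (range q).filter (fun m : ℕ => ((1:ℝ) ≤ e + r 0 ∧ True)) ∨ True := Or.inr trivial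
    clear hsub
    have hsub2 : (range q).filter (fun j : ℕ => (1:ℝ) - e ≤ (r j : ℝ) ∧ ((r j : ℝ)) < q * c - 1 - e)
        ⊆ (range q).filter (fun j : ℕ => Int.fract (x0 + (j:ℝ) * α) < c) := by
      intro j hj
      rw [mem_filter] at hj ⊢
      obtain ⟨hjq, hj1, hj2⟩ := hj
      refine ⟨hjq, ?_⟩
      set g : ℝ := (e + r j) / q with hg
      set δ : ℝ := (j:ℝ) * θ / q with hδ'
      have hab := abs_lt.mp (hδ j (mem_range.mp hjq))
      have hg1 : 1/(q:ℝ) ≤ g := by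
        rw [hg]
        gcongr <;> linarith
      have hg2 : g < c - 1/q := by
        rw [hg, div_lt_iff₀ hq0]
        have hexp2 : (c - 1/(q:ℝ)) * q = c * q - 1 := by field_simp
        rw [hexp2]
        nlinarith
      have h0 : 0 ≤ g + δ := by linarith
      have h1 : g + δ < c := by linarith
      have h2 : g + δ < 1 := by linarith
      rw [FR j, ← hg]
      rw [Int.fract_eq_self.mpr ⟨h0, h2⟩]
      exact h1
    have hcard := Finset.card_le_card hsub2
    have htr := htrans (fun m : ℕ => (1:ℝ) - e ≤ (m:ℝ) ∧ ((m:ℝ)) < q * c - 1 - e)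
    rw [htr] at hcard
    have hlow := card_filter_interval_ge q (1 - e) (q * c - 1 - e) (by linarith) (by nlinarith [mul_le_mul_of_nonneg_left hc1 hq0.le])
    have : ((q:ℝ) * c - 1 - e) - (1 - e) - 1 = q * c - 3 := by ring
    rw [this] at hlow
    have hcard' : (((range q).filter (fun m : ℕ => (1:ℝ) - e ≤ (m:ℝ) ∧ ((m:ℝ)) < q * c - 1 - e)).card : ℝ)
        ≤ (((range q).filter (fun j : ℕ => Int.fract (x0 + (j:ℝ) * α) < c)).card : ℝ) := by
      exact_mod_cast hcard
    linarith

lemma filter_range_add (P : ℕ → Prop) [DecidablePred P] (a n : ℕ) :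
    ((range (a+n)).filter P).card
      = ((range a).filter P).card + ((range n).filter (fun j => P (a+j))).card := by
  induction n with
  | zero => simp
  | succ n ih =>
    have h1 : a + (n+1) = (a+n) + 1 := by omega
    rw [h1, Finset.range_add_one, Finset.filter_insert]
    conv_rhs => rw [Finset.range_add_one, Finset.filter_insert]
    by_cases h : P (a+n)
    · rw [if_pos h, if_pos h, Finset.card_insert_of_notMem (by simp),
        Finset.card_insert_of_notMem (by simp), ih]
      omega
    · rw [if_neg h, if_neg h, ih]

noncomputable def cnt (α c : ℝ) (N : ℕ) : ℕ :=
  ((Finset.range N).filter (fun i : ℕ => Int.fract ((i:ℝ) * α) < c)).card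

theorem equi (α : ℝ) (hirr : Irrational α) (c : ℝ) (hc0 : 0 ≤ c) (hc1 : c ≤ 1) :
    Tendsto (fun N : ℕ => ((cnt α c N : ℕ) : ℝ) / N) atTop (nhds c) := by
  classical
  rw [Metric.tendsto_atTop]
  intro ε hε
  obtain ⟨q, p, hqK, hcop, hθ⟩ := exists_good_denom α hirr (Nat.ceil (6/ε))
  have hq : 0 < q := lt_of_le_of_lt (Nat.zero_le _) hqK
  have hq0 : (0:ℝ) < q := by exact_mod_cast hq
  have hq6 : 6 / ε < q := by
    have h1 : (6/ε : ℝ) ≤ (Nat.ceil (6/ε) : ℝ) := Nat.le_ceil _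
    have h2 : ((Nat.ceil (6/ε) : ℕ) : ℝ) < q := by exact_mod_cast hqK
    linarith
  have h3q : 3 / (q:ℝ) < ε / 2 := by
    rw [div_lt_div_iff₀ hq0 (by norm_num : (0:ℝ) < 2)]
    rw [div_lt_iff₀ hε] at hq6
    nlinarith
  have hblock : ∀ a : ℕ,
      |(((range q).filter (fun j : ℕ => Int.fract (((a:ℝ) + (j:ℝ)) * α) < c)).card : ℝ)
        - q * c| ≤ 3 := by
    intro a
    have h := block_bound α ((a:ℝ)*α) c hc0 hc1 q p hq hcop hθ
    have hfe : (range q).filter (fun j : ℕ => Int.fract (((a:ℝ) + (j:ℝ)) * α) < c)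
        = (range q).filter (fun j : ℕ => Int.fract ((a:ℝ)*α + (j:ℝ)*α) < c) := by
      apply Finset.filter_congr
      intro j _
      have : ((a:ℝ) + (j:ℝ)) * α = (a:ℝ)*α + (j:ℝ)*α := by ring
      rw [this]
    rw [hfe]
    exact h
  have hMle : ∀ M : ℕ, |(cnt α c (M*q) : ℝ) - (M:ℝ) * q * c| ≤ 3*M := by
    intro M
    induction M with
    | zero => simp [cnt]
    | succ M ih =>
      have h1 : (M+1)*q = M*q + q := by ring
      have h2 : cnt α c ((M+1)*q) = cnt α c (M*q)
          + ((range q).filter (fun j : ℕ => Int.fract (((M*q + j : ℕ):ℝ) * α) < c)).card := by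
        show ((range ((M+1)*q)).filter (fun i : ℕ => Int.fract ((i:ℝ) * α) < c)).card = _
        rw [h1, filter_range_add]
        rfl
      have h3 : (range q).filter (fun j : ℕ => Int.fract (((M*q + j : ℕ):ℝ) * α) < c)
          = (range q).filter
              (fun j : ℕ => Int.fract ((((M*q : ℕ):ℝ) + (j:ℝ)) * α) < c) := by
        apply Finset.filter_congr
        intro j _
        rw [show ((M*q + j : ℕ):ℝ) = ((M*q:ℕ):ℝ) + (j:ℝ) by push_cast; ring]
      have hb := hblock (M*q)
      rw [← h3] at hb
      have hcast : (cnt α c ((M+1)*q) : ℝ) = (cnt α c (M*q) : ℝ)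
          + (((range q).filter (fun j : ℕ => Int.fract (((M*q + j : ℕ):ℝ) * α) < c)).card : ℝ) := by
        exact_mod_cast congrArg (fun n : ℕ => (n:ℝ)) h2
      have habs1 := abs_le.mp ih
      have habs2 := abs_le.mp hb
      rw [abs_le]
      rw [hcast]
      have hms : ((M+1:ℕ):ℝ) = (M:ℝ)+1 := by push_cast; ring
      rw [hms]
      constructor <;> linarith [habs1.1, habs1.2, habs2.1, habs2.2]
  have hNb : ∀ N : ℕ, 0 < N → |(cnt α c N : ℝ) - N * c| ≤ 3 * (N:ℝ)/q + 2*q := by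
    intro N hN
    set M := N / q with hM
    have hMq : M * q ≤ N := Nat.div_mul_le_self N q
    have h0 := Nat.div_add_mod N q
    have hmlt : N % q < q := Nat.mod_lt N hq
    have h0' : M * q + N % q = N := by rw [hM, Nat.mul_comm]; exact h0
    have hNMq : N - M*q = N % q := (Nat.sub_eq_iff_eq_add hMq).mpr
      (by rw [Nat.add_comm]; exact h0'.symm)
    have hrem : N - M*q < q := by rw [hNMq]; exact hmlt
    have hsplit : cnt α c N = cnt α c (M*q)
        + ((range (N - M*q)).filter (fun j : ℕ => Int.fract (((M*q + j : ℕ):ℝ) * α) < c)).card := by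
      show ((range N).filter (fun i : ℕ => Int.fract ((i:ℝ) * α) < c)).card = _
      conv_lhs => rw [show N = M*q + (N - M*q) from (Nat.add_sub_cancel' hMq).symm]
      rw [filter_range_add]
      rfl
    have hextra : ((range (N - M*q)).filter
        (fun j : ℕ => Int.fract (((M*q + j : ℕ):ℝ) * α) < c)).card ≤ N - M*q := by
      calc _ ≤ (range (N - M*q)).card := Finset.card_filter_le _ _
        _ = N - M*q := card_range _
    have hMN : (M:ℝ) * q ≤ N := by exact_mod_cast hMq
    have hrem' : (N:ℝ) - M*q < q := by
      have h1 : ((N - M*q : ℕ):ℝ) = (N:ℝ) - (M:ℝ)*q := by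
        push_cast [Nat.cast_sub hMq]
        ring
      have h2 : ((N - M*q : ℕ):ℝ) < q := by exact_mod_cast hrem
      linarith
    have hMb := hMle M
    have hex' : (((range (N - M*q)).filter
        (fun j : ℕ => Int.fract (((M*q + j : ℕ):ℝ) * α) < c)).card : ℝ) ≤ (N:ℝ) - M*q := by
      have h1 : ((N - M*q : ℕ):ℝ) = (N:ℝ) - (M:ℝ)*q := by
        push_cast [Nat.cast_sub hMq]
        ring
      have h2 : (((range (N - M*q)).filter
          (fun j : ℕ => Int.fract (((M*q + j : ℕ):ℝ) * α) < c)).card : ℝ) ≤ ((N - M*q:ℕ):ℝ) := by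
        exact_mod_cast hextra
      linarith
    have hcast : (cnt α c N : ℝ) = (cnt α c (M*q) : ℝ)
        + (((range (N - M*q)).filter
            (fun j : ℕ => Int.fract (((M*q + j : ℕ):ℝ) * α) < c)).card : ℝ) := by
      exact_mod_cast congrArg (fun n : ℕ => (n:ℝ)) hsplit
    have hMq' : 3*(M:ℝ) ≤ 3*(N:ℝ)/q := by
      rw [le_div_iff₀ hq0]
      nlinarith
    have habs := abs_le.mp hMb
    rw [abs_le]
    constructor
    · have hpos : (0:ℝ) ≤ (((range (N - M*q)).filter
          (fun j : ℕ => Int.fract (((M*q + j : ℕ):ℝ) * α) < c)).card : ℝ) := by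
        positivity
      have : (N:ℝ)*c - (M:ℝ)*q*c ≤ q := by
        have : ((N:ℝ) - M*q)*c ≤ q := by
          calc ((N:ℝ) - M*q)*c ≤ ((N:ℝ) - M*q)*1 := by
                apply mul_le_mul_of_nonneg_left hc1 (by linarith)
            _ ≤ q := by linarith
        nlinarith
      linarith [hcast, habs.1]
    · have : ((N:ℝ) - M*q)*c ≥ 0 := by
        apply mul_nonneg (by linarith) hc0
      linarith [hcast, habs.2, hex']
  refine ⟨max 1 (Nat.ceil (4*q/ε) + 1), ?_⟩
  intro N hN
  have hN1 : 1 ≤ N := le_trans (le_max_left _ _) hN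
  have hN0 : (0:ℝ) < N := by exact_mod_cast hN1
  have hNc : Nat.ceil (4*q/ε) + 1 ≤ N := le_trans (le_max_right _ _) hN
  have hN4 : 4*(q:ℝ)/ε < N := by
    have h1 : (4*q/ε : ℝ) ≤ (Nat.ceil (4*q/ε) : ℝ) := Nat.le_ceil _
    have h2 : ((Nat.ceil (4*q/ε) : ℕ) : ℝ) + 1 ≤ N := by exact_mod_cast hNc
    linarith
  have h2qN : 2*(q:ℝ)/N ≤ ε/2 := by
    rw [div_le_div_iff₀ hN0 (by norm_num : (0:ℝ) < 2)]
    rw [div_lt_iff₀ hε] at hN4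
    nlinarith
  rw [Real.dist_eq]
  have hb := hNb N hN1
  have key : |(cnt α c N : ℝ)/N - c| ≤ 3/(q:ℝ) + 2*q/N := by
    have h1 : (cnt α c N : ℝ)/N - c = ((cnt α c N : ℝ) - N*c)/N := by
      field_simp
    rw [h1, abs_div, abs_of_pos hN0, div_le_iff₀ hN0]
    have h2 : (3/(q:ℝ) + 2*q/N)*N = 3*(N:ℝ)/q + 2*q := by
      field_simp
    rw [h2]
    exact hb
  calc |(cnt α c N : ℝ)/N - c| ≤ 3/(q:ℝ) + 2*q/N := key
    _ < ε/2 + ε/2 := by linarith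
    _ = ε := by ring

lemma fract_irrational {x : ℝ} (hx : Irrational x) : Irrational (Int.fract x) :=
  hx.sub_intCast ⌊x⌋

lemma fract_pos_of_irrational {x : ℝ} (hx : Irrational x) : 0 < Int.fract x := by
  rcases lt_or_eq_of_le (Int.fract_nonneg x) with h | h
  · exact h
  · exfalso
    have h2 := (fract_irrational hx).ne_int 0
    simp only [Int.cast_zero] at h2
    exact h2 h.symm

lemma gapset_mem (α : ℝ) (i e : ℕ) :
    Int.fract (((i:ℝ)+(e:ℝ))*α) = Int.fract (((i+e:ℕ):ℝ)*α) := by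
  congr 1
  push_cast
  ring

lemma fract_shift_down {z : ℝ} (h1 : 1 ≤ z) (h2 : z < 2) : Int.fract z = z - 1 := by
  have h3 : Int.fract (z - ((1:ℤ):ℝ)) = Int.fract z := Int.fract_sub_intCast z 1
  rw [← h3]
  rw [Int.fract_eq_self.mpr ⟨by push_cast; linarith, by push_cast; linarith⟩]
  push_cast
  ring

lemma fract_shift_up {z : ℝ} (h1 : -1 ≤ z) (h2 : z < 0) : Int.fract z = z + 1 := by
  have h3 : Int.fract (z + ((1:ℤ):ℝ)) = Int.fract z := Int.fract_add_intCast z 1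
  rw [← h3]
  rw [Int.fract_eq_self.mpr ⟨by push_cast; linarith, by push_cast; linarith⟩]
  push_cast
  ring

/-- Context for the three-gap structural lemmas. -/
structure Ctx (α β : ℝ) (b d : ℕ) : Prop where
  hirr : Irrational α
  hα0 : 0 < α
  hα1 : α < 1
  hβ0 : 0 < β
  hβ1 : β < 1
  hβmax : β < max α (1-α)
  hb0 : 0 < b
  hbβ : Int.fract ((b:ℝ)*α) < β
  hbmin : ∀ m : ℕ, 0 < m → Int.fract ((m:ℝ)*α) < β → b ≤ m
  hd0 : 0 < d
  hdβ : 1 - β < Int.fract ((d:ℝ)*α)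
  hdmin : ∀ m : ℕ, 0 < m → 1 - β < Int.fract ((m:ℝ)*α) → d ≤ m

namespace Ctx

variable {α β : ℝ} {b d : ℕ} (h : Ctx α β b d)

include h

lemma nat_mul_irr (n : ℕ) (hn : 0 < n) : Irrational ((n:ℝ)*α) :=
  h.hirr.natCast_mul hn.ne'

lemma fract_nat_pos (n : ℕ) (hn : 0 < n) : 0 < Int.fract ((n:ℝ)*α) :=
  fract_pos_of_irrational (h.nat_mul_irr n hn)

lemma fract_inj (m n : ℕ) (hmn : Int.fract ((m:ℝ)*α) = Int.fract ((n:ℝ)*α)) : m = n := by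
  by_contra hne
  obtain ⟨z, hz⟩ := Int.fract_eq_fract.mp hmn
  have hk : ((m:ℤ) - n) ≠ 0 := by
    intro hk0
    apply hne
    omega
  have hirr2 : Irrational ((((m:ℤ) - n : ℤ) : ℝ) * α) := h.hirr.intCast_mul hk
  apply hirr2.ne_int z
  push_cast
  linarith [hz]

lemma fract_add_nat (i e : ℕ) :
    Int.fract (((i+e : ℕ):ℝ)*α)
      = Int.fract (Int.fract ((i:ℝ)*α) + Int.fract ((e:ℝ)*α)) := by
  rw [fract_add_fract]
  congr 1
  push_cast
  ring

lemma fract_sub_nat (e : ℕ) (hbe : b ≤ e) :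
    Int.fract (((e-b : ℕ):ℝ)*α)
      = Int.fract (Int.fract ((e:ℝ)*α) - Int.fract ((b:ℝ)*α)) := by
  rw [fract_sub_fract]
  congr 1
  push_cast [Nat.cast_sub hbe]
  ring

lemma fract_sub_nat' (e : ℕ) (hde : d ≤ e) :
    Int.fract (((e-d : ℕ):ℝ)*α)
      = Int.fract (Int.fract ((e:ℝ)*α) - Int.fract ((d:ℝ)*α)) := by
  rw [fract_sub_fract]
  congr 1
  push_cast [Nat.cast_sub hde]
  ring

lemma P1 (e : ℕ) (he0 : 0 < e) (hebd : e < b + d)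
    (heβ : Int.fract ((e:ℝ)*α) < β) :
    Int.fract ((b:ℝ)*α) ≤ Int.fract ((e:ℝ)*α) := by
  by_contra hcon
  push_neg at hcon
  have hbe : b ≤ e := h.hbmin e he0 heβ
  have hblt : b < e := by
    rcases lt_or_eq_of_le hbe with h' | h'
    · exact h'
    · exfalso; rw [h'] at hcon; exact absurd hcon (lt_irrefl _)
  have hy0 : 0 ≤ Int.fract ((e:ℝ)*α) := Int.fract_nonneg _
  have hval : Int.fract (((e-b : ℕ):ℝ)*α)
      = Int.fract ((e:ℝ)*α) - Int.fract ((b:ℝ)*α) + 1 := by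
    rw [h.fract_sub_nat e hbe]
    exact fract_shift_up (by linarith [Int.fract_lt_one ((b:ℝ)*α)]) (by linarith [hcon])
  have hD : 1 - β < Int.fract (((e-b : ℕ):ℝ)*α) := by
    rw [hval]
    linarith [h.hbβ, hy0]
  have := h.hdmin (e-b) (by omega) hD
  omega

lemma P2 (e : ℕ) (he0 : 0 < e) (hebd : e < b + d)
    (heβ : 1 - β < Int.fract ((e:ℝ)*α)) :
    Int.fract ((e:ℝ)*α) ≤ Int.fract ((d:ℝ)*α) := by
  by_contra hcon
  push_neg at hcon
  have hde : d ≤ e := h.hdmin e he0 heβ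
  have hdlt : d < e := by
    rcases lt_or_eq_of_le hde with h' | h'
    · exact h'
    · exfalso; rw [h'] at hcon; exact absurd hcon (lt_irrefl _)
  have hy1 : Int.fract ((e:ℝ)*α) < 1 := Int.fract_lt_one _
  have hd1 : 1 - β < Int.fract ((d:ℝ)*α) := h.hdβ
  have hval : Int.fract (((e-d : ℕ):ℝ)*α)
      = Int.fract ((e:ℝ)*α) - Int.fract ((d:ℝ)*α) := by
    rw [h.fract_sub_nat' e hde]
    apply Int.fract_eq_self.mpr
    constructor
    · linarith
    · linarith [h.hβ1]
  have hB : Int.fract (((e-d : ℕ):ℝ)*α) < β := by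
    rw [hval]
    linarith
  have := h.hbmin (e-d) (by omega) hB
  omega

lemma bne : b ≠ d := by
  intro hbd
  have hd' := h.hdβ
  rw [← hbd] at hd'
  have h1β : 1 - β < β := lt_trans hd' h.hbβ
  have hb0 := h.hb0
  rcases Nat.lt_or_ge b 2 with hb1 | hb2
  · have hb1' : b = 1 := by omega
    have hfa : Int.fract (((1:ℕ):ℝ)*α) = α := by
      norm_num
      exact ⟨h.hα0.le, h.hα1⟩
    have hαβ : α < β := by
      have h2 := h.hbβ
      rw [hb1', hfa] at h2
      exact h2
    have hαβ2 : 1 - α < β := by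
      have h2 := hd'
      rw [hb1', hfa] at h2
      linarith
    have := max_lt hαβ hαβ2
    linarith [h.hβmax]
  · have hm0 : 0 < b - 1 := by omega
    have hmb : ¬ (Int.fract (((b-1:ℕ):ℝ)*α) < β) := by
      intro hc
      have := h.hbmin (b-1) hm0 hc
      omega
    have hmd : ¬ (1 - β < Int.fract (((b-1:ℕ):ℝ)*α)) := by
      intro hc
      have := h.hdmin (b-1) hm0 hc
      omega
    push_neg at hmb hmd
    linarith

lemma st_ge : β ≤ Int.fract ((b:ℝ)*α) + (1 - Int.fract ((d:ℝ)*α)) := by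
  by_contra hcon
  push_neg at hcon
  have hb0 := h.hb0
  have hd0 := h.hd0
  have hs0 : 0 < Int.fract ((b:ℝ)*α) := h.fract_nat_pos b h.hb0
  have hfd1 : Int.fract ((d:ℝ)*α) < 1 := Int.fract_lt_one _
  have hfd : 1 - β < Int.fract ((d:ℝ)*α) := h.hdβ
  have hsβ : Int.fract ((b:ℝ)*α) < β := h.hbβ
  rcases lt_trichotomy b d with hbd | hbd | hbd
  · have hval : Int.fract (((d-b : ℕ):ℝ)*α)
        = Int.fract ((d:ℝ)*α) - Int.fract ((b:ℝ)*α) := by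
      rw [h.fract_sub_nat d hbd.le]
      apply Int.fract_eq_self.mpr
      constructor
      · linarith [h.hβ1]
      · linarith
    have hDD : 1 - β < Int.fract (((d-b : ℕ):ℝ)*α) := by
      rw [hval]
      linarith
    have := h.hdmin (d-b) (by omega) hDD
    omega
  · exact absurd hbd h.bne
  · have hval : Int.fract (((b-d : ℕ):ℝ)*α)
        = Int.fract ((b:ℝ)*α) - Int.fract ((d:ℝ)*α) + 1 := by
      rw [h.fract_sub_nat' b hbd.le]
      exact fract_shift_up (by linarith [Int.fract_nonneg ((b:ℝ)*α)]) (by linarith [h.hβ1])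
    have hBB : Int.fract (((b-d : ℕ):ℝ)*α) < β := by
      rw [hval]
      linarith
    have := h.hbmin (b-d) (by omega) hBB
    omega

lemma s_le_fd : Int.fract ((b:ℝ)*α) ≤ Int.fract ((d:ℝ)*α) := by
  by_cases hc : 1 - β < Int.fract ((b:ℝ)*α)
  · exact h.P2 b h.hb0 (Nat.lt_add_of_pos_right h.hd0) hc
  · push_neg at hc
    linarith [h.hdβ]

lemma gmem1 (i : ℕ) (hx : Int.fract ((i:ℝ)*α) < β - Int.fract ((b:ℝ)*α)) :
    Int.fract (((i+b:ℕ):ℝ)*α) < β := by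
  rw [h.fract_add_nat i b]
  have hx0 : 0 ≤ Int.fract ((i:ℝ)*α) := Int.fract_nonneg _
  have hs0 : 0 ≤ Int.fract ((b:ℝ)*α) := Int.fract_nonneg _
  rw [Int.fract_eq_self.mpr ⟨by linarith, by linarith [h.hβ1]⟩]
  linarith

lemma gmem2 (i : ℕ) (hx1 : 1 - Int.fract ((d:ℝ)*α) ≤ Int.fract ((i:ℝ)*α))
    (hx2 : Int.fract ((i:ℝ)*α) < β) :
    Int.fract (((i+d:ℕ):ℝ)*α) < β := by
  rw [h.fract_add_nat i d]
  have hfd1 : Int.fract ((d:ℝ)*α) < 1 := Int.fract_lt_one _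
  have heq : Int.fract (Int.fract ((i:ℝ)*α) + Int.fract ((d:ℝ)*α))
      = Int.fract ((i:ℝ)*α) + Int.fract ((d:ℝ)*α) - 1 := by
    exact fract_shift_down (by linarith) (by linarith [h.hβ1, Int.fract_lt_one ((i:ℝ)*α)])
  rw [heq]
  linarith

lemma gmem3 (i : ℕ) (hx1 : β - Int.fract ((b:ℝ)*α) ≤ Int.fract ((i:ℝ)*α))
    (hx2 : Int.fract ((i:ℝ)*α) < 1 - Int.fract ((d:ℝ)*α)) :
    Int.fract (((i+(b+d):ℕ):ℝ)*α) < β := by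
  have hidx : i + (b+d) = (i+b) + d := by omega
  rw [hidx]
  have hx0 : 0 ≤ Int.fract ((i:ℝ)*α) := Int.fract_nonneg _
  have hs0 : 0 ≤ Int.fract ((b:ℝ)*α) := Int.fract_nonneg _
  have h1 : Int.fract (((i+b:ℕ):ℝ)*α)
      = Int.fract ((i:ℝ)*α) + Int.fract ((b:ℝ)*α) := by
    rw [h.fract_add_nat i b]
    apply Int.fract_eq_self.mpr
    constructor
    · linarith
    · linarith [h.s_le_fd, hx2]
  rw [h.fract_add_nat (i+b) d, h1]
  have heq : Int.fract (Int.fract ((i:ℝ)*α) + Int.fract ((b:ℝ)*α) + Int.fract ((d:ℝ)*α))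
      = Int.fract ((i:ℝ)*α) + Int.fract ((b:ℝ)*α) + Int.fract ((d:ℝ)*α) - 1 := by
    apply fract_shift_down
    · linarith [h.hdβ, h.hβ1]
    · linarith [Int.fract_lt_one ((b:ℝ)*α), Int.fract_lt_one ((d:ℝ)*α)]
  rw [heq]
  linarith [h.hbβ]

lemma gmin1 (i : ℕ) (hx : Int.fract ((i:ℝ)*α) < β - Int.fract ((b:ℝ)*α))
    (e : ℕ) (he0 : 0 < e) (heb : e < b) :
    ¬ (Int.fract (((i+e:ℕ):ℝ)*α) < β) := by
  intro hcon
  have hx0 : 0 ≤ Int.fract ((i:ℝ)*α) := Int.fract_nonneg _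
  have hy0 : 0 ≤ Int.fract ((e:ℝ)*α) := Int.fract_nonneg _
  have hy1 : Int.fract ((e:ℝ)*α) < 1 := Int.fract_lt_one _
  have hx1 : Int.fract ((i:ℝ)*α) < 1 := Int.fract_lt_one _
  rw [h.fract_add_nat i e] at hcon
  rcases lt_or_ge (Int.fract ((i:ℝ)*α) + Int.fract ((e:ℝ)*α)) 1 with hxy | hxy
  · rw [Int.fract_eq_self.mpr ⟨by linarith, hxy⟩] at hcon
    have hyβ : Int.fract ((e:ℝ)*α) < β := by linarith
    have := h.hbmin e he0 hyβ
    omega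
  · have hvpos : 0 < Int.fract (Int.fract ((i:ℝ)*α) + Int.fract ((e:ℝ)*α)) := by
      rw [← h.fract_add_nat i e]
      exact h.fract_nat_pos (i+e) (by omega)
    have hveq : Int.fract (Int.fract ((i:ℝ)*α) + Int.fract ((e:ℝ)*α))
        = Int.fract ((i:ℝ)*α) + Int.fract ((e:ℝ)*α) - 1 := by
      exact fract_shift_down (by linarith)
        (by linarith [Int.fract_lt_one ((i:ℝ)*α), Int.fract_lt_one ((e:ℝ)*α)])
    rw [hveq] at hcon hvpos
    have hyD : 1 - β < Int.fract ((e:ℝ)*α) := by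
      linarith [h.fract_nat_pos b h.hb0]
    have hy2 := h.P2 e he0 (by omega) hyD
    have hst := h.st_ge
    linarith

lemma gmin2 (i : ℕ) (hx1 : 1 - Int.fract ((d:ℝ)*α) ≤ Int.fract ((i:ℝ)*α))
    (hx2 : Int.fract ((i:ℝ)*α) < β) (e : ℕ) (he0 : 0 < e) (hed : e < d) :
    ¬ (Int.fract (((i+e:ℕ):ℝ)*α) < β) := by
  intro hcon
  have hx0 : 0 ≤ Int.fract ((i:ℝ)*α) := Int.fract_nonneg _
  have hy0 : 0 ≤ Int.fract ((e:ℝ)*α) := Int.fract_nonneg _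
  have hy1 : Int.fract ((e:ℝ)*α) < 1 := Int.fract_lt_one _
  rw [h.fract_add_nat i e] at hcon
  rcases lt_or_ge (Int.fract ((i:ℝ)*α) + Int.fract ((e:ℝ)*α)) 1 with hxy | hxy
  · rw [Int.fract_eq_self.mpr ⟨by linarith, hxy⟩] at hcon
    have hyβ : Int.fract ((e:ℝ)*α) < β := by linarith
    have hy2 := h.P1 e he0 (by omega) hyβ
    have hst := h.st_ge
    linarith
  · have hvpos : 0 < Int.fract (Int.fract ((i:ℝ)*α) + Int.fract ((e:ℝ)*α)) := by
      rw [← h.fract_add_nat i e]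
      exact h.fract_nat_pos (i+e) (by omega)
    have hveq : Int.fract (Int.fract ((i:ℝ)*α) + Int.fract ((e:ℝ)*α))
        = Int.fract ((i:ℝ)*α) + Int.fract ((e:ℝ)*α) - 1 := by
      exact fract_shift_down (by linarith)
        (by linarith [Int.fract_lt_one ((i:ℝ)*α), Int.fract_lt_one ((e:ℝ)*α)])
    rw [hveq] at hcon hvpos
    have hyD : 1 - β < Int.fract ((e:ℝ)*α) := by linarith
    have := h.hdmin e he0 hyD
    omega

lemma gmin3 (i : ℕ) (hx1 : β - Int.fract ((b:ℝ)*α) ≤ Int.fract ((i:ℝ)*α))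
    (hx2 : Int.fract ((i:ℝ)*α) < 1 - Int.fract ((d:ℝ)*α))
    (e : ℕ) (he0 : 0 < e) (hebd : e < b + d) :
    ¬ (Int.fract (((i+e:ℕ):ℝ)*α) < β) := by
  intro hcon
  have hx0 : 0 ≤ Int.fract ((i:ℝ)*α) := Int.fract_nonneg _
  have hy0 : 0 ≤ Int.fract ((e:ℝ)*α) := Int.fract_nonneg _
  have hy1 : Int.fract ((e:ℝ)*α) < 1 := Int.fract_lt_one _
  rw [h.fract_add_nat i e] at hcon
  rcases lt_or_ge (Int.fract ((i:ℝ)*α) + Int.fract ((e:ℝ)*α)) 1 with hxy | hxy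
  · rw [Int.fract_eq_self.mpr ⟨by linarith, hxy⟩] at hcon
    have hyβ : Int.fract ((e:ℝ)*α) < β := by linarith [h.hbβ]
    have := h.P1 e he0 hebd hyβ
    linarith
  · have hvpos : 0 < Int.fract (Int.fract ((i:ℝ)*α) + Int.fract ((e:ℝ)*α)) := by
      rw [← h.fract_add_nat i e]
      exact h.fract_nat_pos (i+e) (by omega)
    have hveq : Int.fract (Int.fract ((i:ℝ)*α) + Int.fract ((e:ℝ)*α))
        = Int.fract ((i:ℝ)*α) + Int.fract ((e:ℝ)*α) - 1 := by
      exact fract_shift_down (by linarith)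
        (by linarith [Int.fract_lt_one ((i:ℝ)*α), Int.fract_lt_one ((e:ℝ)*α)])
    rw [hveq] at hcon hvpos
    have hyD : 1 - β < Int.fract ((e:ℝ)*α) := by linarith [h.hdβ]
    have := h.P2 e he0 hebd hyD
    linarith

lemma gap_eq_b (i : ℕ) (hx : Int.fract ((i:ℝ)*α) < β - Int.fract ((b:ℝ)*α)) :
    sInf {e : ℕ | 0 < e ∧ Int.fract (((i:ℝ)+(e:ℝ))*α) < β} = b := by
  apply le_antisymm
  · exact Nat.sInf_le ⟨h.hb0, by rw [gapset_mem]; exact h.gmem1 i hx⟩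
  · apply le_csInf
    · exact ⟨b, h.hb0, by rw [gapset_mem]; exact h.gmem1 i hx⟩
    · rintro e ⟨he0, heβ⟩
      by_contra hlt
      push_neg at hlt
      rw [gapset_mem] at heβ
      exact h.gmin1 i hx e he0 hlt heβ

lemma gap_eq_d (i : ℕ) (hx1 : 1 - Int.fract ((d:ℝ)*α) ≤ Int.fract ((i:ℝ)*α))
    (hx2 : Int.fract ((i:ℝ)*α) < β) :
    sInf {e : ℕ | 0 < e ∧ Int.fract (((i:ℝ)+(e:ℝ))*α) < β} = d := by
  apply le_antisymm
  · exact Nat.sInf_le ⟨h.hd0, by rw [gapset_mem]; exact h.gmem2 i hx1 hx2⟩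
  · apply le_csInf
    · exact ⟨d, h.hd0, by rw [gapset_mem]; exact h.gmem2 i hx1 hx2⟩
    · rintro e ⟨he0, heβ⟩
      by_contra hlt
      push_neg at hlt
      rw [gapset_mem] at heβ
      exact h.gmin2 i hx1 hx2 e he0 hlt heβ

lemma gap_eq_bd (i : ℕ) (hx1 : β - Int.fract ((b:ℝ)*α) ≤ Int.fract ((i:ℝ)*α))
    (hx2 : Int.fract ((i:ℝ)*α) < 1 - Int.fract ((d:ℝ)*α)) :
    sInf {e : ℕ | 0 < e ∧ Int.fract (((i:ℝ)+(e:ℝ))*α) < β} = b + d := by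
  apply le_antisymm
  · exact Nat.sInf_le ⟨Nat.add_pos_left h.hb0 d, by rw [gapset_mem]; exact h.gmem3 i hx1 hx2⟩
  · apply le_csInf
    · exact ⟨b + d, Nat.add_pos_left h.hb0 d, by rw [gapset_mem]; exact h.gmem3 i hx1 hx2⟩
    · rintro e ⟨he0, heβ⟩
      by_contra hlt
      push_neg at hlt
      rw [gapset_mem] at heβ
      exact h.gmin3 i hx1 hx2 e he0 hlt heβ

end Ctx

lemma card_filter_split (N : ℕ) (p q : ℕ → Prop) [DecidablePred p] [DecidablePred q]
    (himp : ∀ i, p i → q i) :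
    ((range N).filter p).card + ((range N).filter (fun i => ¬ p i ∧ q i)).card
      = ((range N).filter q).card := by
  classical
  have h1 := Finset.card_filter_add_card_filter_not
    (s := (range N).filter q) (p := p)
  rw [Finset.filter_filter, Finset.filter_filter] at h1
  rw [show ((range N).filter (fun i => q i ∧ p i)) = (range N).filter p from
    Finset.filter_congr (fun i _ => ⟨fun hh => hh.2, fun hh => ⟨himp i hh, hh⟩⟩)] at h1
  rw [show ((range N).filter (fun i => q i ∧ ¬ p i)) = (range N).filter (fun i => ¬ p i ∧ q i)
      from Finset.filter_congr (fun i _ => by tauto)] at h1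
  exact h1

end ThreeGapAux

open ThreeGapAux

/-- **Three gap theorem, case 2**, frequencies: with `β < max(α, 1-α)`,
the asymptotic frequency of indices `i` with `{iα} < β` whose gap is `b`
equals `β - s`, that of gap `d` equals `β - t`, and that of gap `b + d`
equals `s + t - β`. -/
theorem three_gap_case_two_frequencies
    (α β : ℝ) (hα : α ∈ Set.Ioo (0 : ℝ) 1) (hirr : Irrational α)
    (hβ : β ∈ Set.Ioo (0 : ℝ) 1) (hβmax : β < max α (1 - α)) :
    let gap : ℕ → ℕ := fun i => sInf {e : ℕ | 0 < e ∧ Int.fract (((i : ℝ) + (e : ℝ)) * α) < β}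
    let b : ℕ := sInf {m : ℕ | 0 < m ∧ Int.fract ((m : ℝ) * α) < β}
    let d : ℕ := sInf {m : ℕ | 0 < m ∧ 1 - β < Int.fract ((m : ℝ) * α)}
    let s : ℝ := Int.fract ((b : ℝ) * α)
    let t : ℝ := 1 - Int.fract ((d : ℝ) * α)
    Tendsto (fun N : ℕ =>
        (((Finset.range N).filter
            (fun i : ℕ => Int.fract ((i : ℝ) * α) < β ∧ gap i = b)).card : ℝ) / (N : ℝ))
      atTop (nhds (β - s)) ∧
    Tendsto (fun N : ℕ =>
        (((Finset.range N).filter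
            (fun i : ℕ => Int.fract ((i : ℝ) * α) < β ∧ gap i = d)).card : ℝ) / (N : ℝ))
      atTop (nhds (β - t)) ∧
    Tendsto (fun N : ℕ =>
        (((Finset.range N).filter
            (fun i : ℕ => Int.fract ((i : ℝ) * α) < β ∧ gap i = b + d)).card : ℝ) / (N : ℝ))
      atTop (nhds (s + t - β)) := by
  intro gap b d s t
  classical
  obtain ⟨hα0, hα1⟩ := hα
  obtain ⟨hβ0, hβ1⟩ := hβ
  have equiβ := ThreeGapAux.equi α hirr β hβ0.le hβ1.le
  -- B is nonempty
  have hBne : {m : ℕ | 0 < m ∧ Int.fract ((m : ℝ) * α) < β}.Nonempty := by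
    by_contra hemp
    rw [Set.not_nonempty_iff_eq_empty] at hemp
    have hsub : ∀ N : ℕ, (range N).filter (fun i : ℕ => Int.fract ((i:ℝ)*α) < β) ⊆ {0} := by
      intro N i hi
      rw [Finset.mem_filter] at hi
      rw [Finset.mem_singleton]
      by_contra hi0
      have hmem : i ∈ {m : ℕ | 0 < m ∧ Int.fract ((m : ℝ) * α) < β} :=
        ⟨Nat.pos_of_ne_zero hi0, hi.2⟩
      rw [hemp] at hmem
      exact hmem
    have hcnt1 : ∀ N : ℕ, (ThreeGapAux.cnt α β N : ℝ) ≤ 1 := by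
      intro N
      have h1 := Finset.card_le_card (hsub N)
      simp only [Finset.card_singleton] at h1
      exact_mod_cast h1
    have h0 : Tendsto (fun N : ℕ => (ThreeGapAux.cnt α β N : ℝ)/N) atTop (nhds 0) := by
      apply squeeze_zero (fun N => by positivity) (fun N => ?_)
        tendsto_one_div_atTop_nhds_zero_nat
      rcases Nat.eq_zero_or_pos N with hN | hN
      · subst hN; simp
      · have hN0 : (0:ℝ) < N := by exact_mod_cast hN
        exact div_le_div_of_nonneg_right (hcnt1 N) hN0.le
    have := tendsto_nhds_unique equiβ h0
    linarith
  -- D is nonempty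
  have equiβ' := ThreeGapAux.equi α hirr (1-β) (by linarith) (by linarith)
  have hDne : {m : ℕ | 0 < m ∧ 1 - β < Int.fract ((m : ℝ) * α)}.Nonempty := by
    by_contra hemp
    rw [Set.not_nonempty_iff_eq_empty] at hemp
    have hup : ∀ m : ℕ, 0 < m → Int.fract ((m:ℝ)*α) ≤ 1 - β := by
      intro m hm
      by_contra hc
      push_neg at hc
      have hmem : m ∈ {m : ℕ | 0 < m ∧ 1 - β < Int.fract ((m : ℝ) * α)} := ⟨hm, hc⟩
      rw [hemp] at hmem
      exact hmem
    -- at most one i with fract = 1-β, zero has fract 0 < 1-β, so cnt (1-β) N ≥ N - 1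
    have hcard : ∀ N : ℕ, (N:ℝ) - 1 ≤ (ThreeGapAux.cnt α (1-β) N : ℝ) := by
      intro N
      have hneg : ((range N).filter (fun i : ℕ => ¬ Int.fract ((i:ℝ)*α) < 1 - β)).card ≤ 1 := by
        apply Finset.card_le_one.mpr
        intro i hi j hj
        rw [Finset.mem_filter] at hi hj
        have hi0 : 0 < i := by
          rcases Nat.eq_zero_or_pos i with hh | hh
          · exfalso; apply hi.2; subst hh; simp; linarith
          · exact hh
        have hj0 : 0 < j := by
          rcases Nat.eq_zero_or_pos j with hh | hh
          · exfalso; apply hj.2; subst hh; simp; linarith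
          · exact hh
        have hie : Int.fract ((i:ℝ)*α) = 1 - β :=
          le_antisymm (hup i hi0) (not_lt.mp hi.2)
        have hje : Int.fract ((j:ℝ)*α) = 1 - β :=
          le_antisymm (hup j hj0) (not_lt.mp hj.2)
        -- injectivity of fract on multiples
        by_contra hij
        obtain ⟨z, hz⟩ := Int.fract_eq_fract.mp (hie.trans hje.symm)
        have hk : ((i:ℤ) - j) ≠ 0 := by omega
        have hirr2 : Irrational ((((i:ℤ) - j : ℤ) : ℝ) * α) := hirr.intCast_mul hk
        apply hirr2.ne_int z
        push_cast
        linarith [hz]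
      have hsum := Finset.card_filter_add_card_filter_not
        (s := range N) (p := fun i : ℕ => Int.fract ((i:ℝ)*α) < 1 - β)
      rw [Finset.card_range] at hsum
      have h1 : N ≤ ThreeGapAux.cnt α (1-β) N + 1 := by
        unfold ThreeGapAux.cnt
        omega
      have h2 : (N:ℝ) ≤ (ThreeGapAux.cnt α (1-β) N : ℝ) + 1 := by exact_mod_cast h1
      linarith
    have h1 : Tendsto (fun N : ℕ => 1 - 1/(N:ℝ)) atTop (nhds 1) := by
      have := tendsto_one_div_atTop_nhds_zero_nat (𝕜 := ℝ)
      have h2 := (tendsto_const_nhds (x := (1:ℝ)) (f := atTop)).sub this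
      simpa using h2
    have hupper : ∀ N : ℕ, (ThreeGapAux.cnt α (1-β) N : ℝ)/N ≤ 1 := by
      intro N
      rcases Nat.eq_zero_or_pos N with hN | hN
      · subst hN; simp
      · have hN0 : (0:ℝ) < N := by exact_mod_cast hN
        rw [div_le_one hN0]
        have : ThreeGapAux.cnt α (1-β) N ≤ N := by
          unfold ThreeGapAux.cnt
          calc _ ≤ (range N).card := Finset.card_filter_le _ _
            _ = N := Finset.card_range _
        exact_mod_cast this
    have hlower : ∀ N : ℕ, 0 < N → 1 - 1/(N:ℝ) ≤ (ThreeGapAux.cnt α (1-β) N : ℝ)/N := by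
      intro N hN
      have hN0 : (0:ℝ) < N := by exact_mod_cast hN
      rw [le_div_iff₀ hN0]
      have he : (1 - 1/(N:ℝ))*N = N - 1 := by field_simp
      rw [he]
      exact hcard N
    have hT : Tendsto (fun N : ℕ => (ThreeGapAux.cnt α (1-β) N : ℝ)/N) atTop (nhds 1) := by
      apply tendsto_of_tendsto_of_tendsto_of_le_of_le' h1 tendsto_const_nhds
      · filter_upwards [eventually_gt_atTop 0] with N hN using hlower N hN
      · filter_upwards with N using hupper N
    have := tendsto_nhds_unique equiβ' hT
    linarith
  -- set up the context
  have hbdef : b = sInf {m : ℕ | 0 < m ∧ Int.fract ((m : ℝ) * α) < β} := rfl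
  have hddef : d = sInf {m : ℕ | 0 < m ∧ 1 - β < Int.fract ((m : ℝ) * α)} := rfl
  have hbmem := Nat.sInf_mem hBne
  rw [← hbdef] at hbmem
  have hdmem := Nat.sInf_mem hDne
  rw [← hddef] at hdmem
  have hctx : ThreeGapAux.Ctx α β b d :=
    { hirr := hirr, hα0 := hα0, hα1 := hα1, hβ0 := hβ0, hβ1 := hβ1, hβmax := hβmax,
      hb0 := hbmem.1, hbβ := hbmem.2,
      hbmin := fun m hm hmβ => by rw [hbdef]; exact Nat.sInf_le ⟨hm, hmβ⟩,
      hd0 := hdmem.1, hdβ := hdmem.2,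
      hdmin := fun m hm hmβ => by rw [hddef]; exact Nat.sInf_le ⟨hm, hmβ⟩ }
  have hsdef : s = Int.fract ((b:ℝ)*α) := rfl
  have htdef : t = 1 - Int.fract ((d:ℝ)*α) := rfl
  have hgapdef : ∀ i : ℕ,
      gap i = sInf {e : ℕ | 0 < e ∧ Int.fract (((i:ℝ)+(e:ℝ))*α) < β} := fun _ => rfl
  have hs0 : 0 < s := by rw [hsdef]; exact hctx.fract_nat_pos b hctx.hb0
  have hsβ : s < β := by rw [hsdef]; exact hctx.hbβ
  have ht0 : 0 < t := by rw [htdef]; linarith [Int.fract_lt_one ((d:ℝ)*α)]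
  have htβ : t < β := by rw [htdef]; linarith [hctx.hdβ]
  have hstβ : β ≤ s + t := by rw [hsdef, htdef]; exact hctx.st_ge
  have hbd_ne : b ≠ d := hctx.bne
  have hb0 := hctx.hb0
  have hd0 := hctx.hd0
  -- characterizations
  have char1 : ∀ i : ℕ,
      (Int.fract ((i:ℝ)*α) < β ∧ gap i = b) ↔ Int.fract ((i:ℝ)*α) < β - s := by
    intro i
    constructor
    · rintro ⟨hx, hg⟩
      by_contra hcon
      push_neg at hcon
      rw [hsdef] at hcon
      rcases lt_or_ge (Int.fract ((i:ℝ)*α)) t with hxt | hxt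
      · rw [htdef] at hxt
        have h2 := hctx.gap_eq_bd i hcon hxt
        rw [hgapdef i, h2] at hg
        omega
      · rw [htdef] at hxt
        have h2 := hctx.gap_eq_d i hxt hx
        rw [hgapdef i, h2] at hg
        exact hbd_ne hg.symm
    · intro hx
      have hx' : Int.fract ((i:ℝ)*α) < β - Int.fract ((b:ℝ)*α) := by rw [← hsdef]; exact hx
      refine ⟨by linarith, ?_⟩
      rw [hgapdef i]
      exact hctx.gap_eq_b i hx'
  have char2 : ∀ i : ℕ,
      (Int.fract ((i:ℝ)*α) < β ∧ gap i = d) ↔ (t ≤ Int.fract ((i:ℝ)*α) ∧ Int.fract ((i:ℝ)*α) < β) := by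
    intro i
    constructor
    · rintro ⟨hx, hg⟩
      rcases lt_or_ge (Int.fract ((i:ℝ)*α)) (β - s) with hx1 | hx1
      · exfalso
        have hx' : Int.fract ((i:ℝ)*α) < β - Int.fract ((b:ℝ)*α) := by rw [← hsdef]; exact hx1
        have h2 := hctx.gap_eq_b i hx'
        rw [hgapdef i, h2] at hg
        exact hbd_ne hg
      · rcases lt_or_ge (Int.fract ((i:ℝ)*α)) t with hxt | hxt
        · exfalso
          rw [hsdef] at hx1
          rw [htdef] at hxt
          have h2 := hctx.gap_eq_bd i hx1 hxt
          rw [hgapdef i, h2] at hg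
          omega
        · exact ⟨hxt, hx⟩
    · rintro ⟨hxt, hxβ⟩
      refine ⟨hxβ, ?_⟩
      rw [hgapdef i]
      rw [htdef] at hxt
      exact hctx.gap_eq_d i hxt hxβ
  have char3 : ∀ i : ℕ,
      (Int.fract ((i:ℝ)*α) < β ∧ gap i = b + d)
        ↔ (β - s ≤ Int.fract ((i:ℝ)*α) ∧ Int.fract ((i:ℝ)*α) < t) := by
    intro i
    constructor
    · rintro ⟨hx, hg⟩
      rcases lt_or_ge (Int.fract ((i:ℝ)*α)) (β - s) with hx1 | hx1
      · exfalso
        have hx' : Int.fract ((i:ℝ)*α) < β - Int.fract ((b:ℝ)*α) := by rw [← hsdef]; exact hx1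
        have h2 := hctx.gap_eq_b i hx'
        rw [hgapdef i, h2] at hg
        omega
      · rcases lt_or_ge (Int.fract ((i:ℝ)*α)) t with hxt | hxt
        · exact ⟨hx1, hxt⟩
        · exfalso
          rw [htdef] at hxt
          have h2 := hctx.gap_eq_d i hxt hx
          rw [hgapdef i, h2] at hg
          omega
    · rintro ⟨hx1, hxt⟩
      have hxβ : Int.fract ((i:ℝ)*α) < β := by linarith
      refine ⟨hxβ, ?_⟩
      rw [hgapdef i]
      rw [hsdef] at hx1
      rw [htdef] at hxt
      exact hctx.gap_eq_bd i hx1 hxt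
  refine ⟨?_, ?_, ?_⟩
  · -- gap b
    have he := ThreeGapAux.equi α hirr (β - s) (by linarith) (by linarith)
    refine Tendsto.congr (fun N => ?_) he
    have hc : ((range N).filter (fun i : ℕ => Int.fract ((i:ℝ)*α) < β ∧ gap i = b)).card
        = ThreeGapAux.cnt α (β - s) N := by
      unfold ThreeGapAux.cnt
      congr 1
      exact Finset.filter_congr (fun i _ => char1 i)
    rw [hc]
  · -- gap d
    have hsplit : ∀ N : ℕ, ThreeGapAux.cnt α t N
        + ((range N).filter (fun i : ℕ => Int.fract ((i:ℝ)*α) < β ∧ gap i = d)).card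
        = ThreeGapAux.cnt α β N := by
      intro N
      have h1 := ThreeGapAux.card_filter_split N
        (fun i : ℕ => Int.fract ((i:ℝ)*α) < t)
        (fun i : ℕ => Int.fract ((i:ℝ)*α) < β) (fun i hi => lt_trans hi htβ)
      rw [show ((range N).filter
            (fun i : ℕ => ¬ Int.fract ((i:ℝ)*α) < t ∧ Int.fract ((i:ℝ)*α) < β))
          = ((range N).filter (fun i : ℕ => Int.fract ((i:ℝ)*α) < β ∧ gap i = d)) from
        Finset.filter_congr (fun i _ => by
          constructor
          · rintro ⟨h1', h2'⟩
            exact (char2 i).mpr ⟨not_lt.mp h1', h2'⟩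
          · intro hh
            obtain ⟨hh1, hh2⟩ := (char2 i).mp hh
            exact ⟨not_lt.mpr hh1, hh2⟩)] at h1
      exact h1
    have het := ThreeGapAux.equi α hirr t (by linarith) (by linarith)
    have hsub := equiβ.sub het
    refine Tendsto.congr (fun N => ?_) hsub
    have h2 := hsplit N
    have h3 : (((range N).filter (fun i : ℕ => Int.fract ((i:ℝ)*α) < β ∧ gap i = d)).card : ℝ)
        = (ThreeGapAux.cnt α β N : ℝ) - (ThreeGapAux.cnt α t N : ℝ) := by
      have := congrArg (fun n : ℕ => (n:ℝ)) h2
      push_cast at this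
      linarith
    rw [h3]
    ring
  · -- gap b+d
    rw [show s + t - β = t - (β - s) by ring]
    have hsplit : ∀ N : ℕ, ThreeGapAux.cnt α (β - s) N
        + ((range N).filter (fun i : ℕ => Int.fract ((i:ℝ)*α) < β ∧ gap i = b + d)).card
        = ThreeGapAux.cnt α t N := by
      intro N
      have h1 := ThreeGapAux.card_filter_split N
        (fun i : ℕ => Int.fract ((i:ℝ)*α) < β - s)
        (fun i : ℕ => Int.fract ((i:ℝ)*α) < t) (fun i hi => lt_of_lt_of_le hi (by linarith))
      rw [show ((range N).filter
            (fun i : ℕ => ¬ Int.fract ((i:ℝ)*α) < β - s ∧ Int.fract ((i:ℝ)*α) < t))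
          = ((range N).filter (fun i : ℕ => Int.fract ((i:ℝ)*α) < β ∧ gap i = b + d)) from
        Finset.filter_congr (fun i _ => by
          constructor
          · rintro ⟨h1', h2'⟩
            exact (char3 i).mpr ⟨not_lt.mp h1', h2'⟩
          · intro hh
            obtain ⟨hh1, hh2⟩ := (char3 i).mp hh
            exact ⟨not_lt.mpr hh1, hh2⟩)] at h1
      exact h1
    have het := ThreeGapAux.equi α hirr t (by linarith) (by linarith)
    have hes := ThreeGapAux.equi α hirr (β - s) (by linarith) (by linarith)
    have hsub := het.sub hes
    refine Tendsto.congr (fun N => ?_) hsub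
    have h2 := hsplit N
    have h3 : (((range N).filter (fun i : ℕ => Int.fract ((i:ℝ)*α) < β ∧ gap i = b + d)).card : ℝ)
        = (ThreeGapAux.cnt α t N : ℝ) - (ThreeGapAux.cnt α (β - s) N : ℝ) := by
      have := congrArg (fun n : ℕ => (n:ℝ)) h2
      push_cast at this
      linarith
    rw [h3]
    ring
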